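/- Universal property of saturation (the reflection of DTop onto saturated d-spaces): let (X, dX) be a d-space and let (Y, dY) be a saturated d-space. A continuous map f : X → Y maps dX into dY if and only if it maps d̂X into dY. In other words, f is a morphism of d-spaces (X, dX) → (Y, dY) if and only if it is a morphism (X, d̂X) → (Y, dY). -/

import Mathlib

open unitInterval Topology Set

/-- Concatenation of two continuous paths `p q : C(I, X)` with `p 1 = q 0`,
traversing `p` on `[0, 1/2]` and `q` on `[1/2, 1]` (both at double speed). -/
noncomputable def concatPath {X : Type*} [TopologicalSpace X]
    (p q : C(unitInterval, X)) (h : p 1 = q 0) : C(unitInterval, X) :=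
  ((⟨p, rfl, rfl⟩ : Path (p 0) (p 1)).trans
    ((⟨q, rfl, rfl⟩ : Path (q 0) (q 1)).cast h rfl)).toContinuousMap

/-- A d-space structure on a topological space `X`: a set of continuous paths
`I → X` containing the constant paths, closed under concatenation and under
precomposition with continuous non-decreasing maps `I → I`. -/
structure DSpace (X : Type*) [TopologicalSpace X] where
  d : Set C(unitInterval, X)
  const_mem : ∀ x : X, ContinuousMap.const unitInterval x ∈ d
  concat_mem : ∀ p ∈ d, ∀ q ∈ d, ∀ h : p 1 = q 0, concatPath p q h ∈ d
  reparam_mem : ∀ p ∈ d, ∀ φ : C(unitInterval, unitInterval), Monotone ⇑φ → p.comp φ ∈ d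

/-- `c` is a directed function on the (open) set `U` for the set of directed
paths `d`: it is continuous on `U` and non-decreasing along every directed path
with image contained in `U`. -/
def IsDirectedFn {X : Type*} [TopologicalSpace X] (d : Set C(unitInterval, X))
    (U : Set X) (c : X → unitInterval) : Prop :=
  ContinuousOn c U ∧ ∀ p ∈ d, Set.range ⇑p ⊆ U → Monotone (c ∘ ⇑p)

/-- A path `p` is weakly directed when, for every directed function `c` on an
open `U`, the map `c ∘ p` is locally non-decreasing on `p ⁻¹' U`. -/
def IsWeaklyDirected {X : Type*} [TopologicalSpace X] (d : Set C(unitInterval, X))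
    (p : C(unitInterval, X)) : Prop :=
  ∀ U : Set X, IsOpen U → ∀ c : X → unitInterval, IsDirectedFn d U c →
    ∀ t : unitInterval, p t ∈ U →
      ∃ V ∈ 𝓝 t, V ⊆ ⇑p ⁻¹' U ∧ MonotoneOn (c ∘ ⇑p) V

/-- The set `d̂X` of weakly directed paths. -/
def satPaths {X : Type*} [TopologicalSpace X] (d : Set C(unitInterval, X)) :
    Set C(unitInterval, X) :=
  {p | IsWeaklyDirected d p}

/-- A set of directed paths is saturated when every weakly directed path is directed. -/
def IsSaturated {X : Type*} [TopologicalSpace X] (d : Set C(unitInterval, X)) : Prop :=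
  satPaths d = d

/-- Universal property of the saturation: for a d-space `(X, dX)` and a saturated
d-space `(Y, dY)`, a continuous map `f : X → Y` maps `dX` into `dY` iff it maps
`d̂X` into `dY`. -/
lemma affine_mem (a b : unitInterval) (s : unitInterval) :
    a.1 + s.1 * (b.1 - a.1) ∈ Set.Icc (0:ℝ) 1 := by
  constructor
  · rcases le_total a.1 b.1 with h | h
    · have : 0 ≤ s.1 * (b.1 - a.1) := mul_nonneg s.2.1 (by linarith)
      have := a.2.1; linarith
    · have h1 : s.1 * (b.1 - a.1) ≥ 1 * (b.1 - a.1) :=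
        mul_le_mul_of_nonpos_right s.2.2 (by linarith)
      have := b.2.1; linarith
  · rcases le_total a.1 b.1 with h | h
    · have h1 : s.1 * (b.1 - a.1) ≤ 1 * (b.1 - a.1) :=
        mul_le_mul_of_nonneg_right s.2.2 (by linarith)
      have := b.2.2; linarith
    · have : s.1 * (b.1 - a.1) ≤ 0 := mul_nonpos_of_nonneg_of_nonpos s.2.1 (by linarith)
      have := a.2.2; linarith

/-- The affine path from `a` to `b` in `I`. -/
noncomputable def affinePath (a b : unitInterval) : C(unitInterval, unitInterval) :=
  ⟨fun s => ⟨a.1 + s.1 * (b.1 - a.1), affine_mem a b s⟩, by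
    refine Continuous.subtype_mk ?_ _
    fun_prop⟩

lemma affinePath_monotone {a b : unitInterval} (hab : a ≤ b) :
    Monotone ⇑(affinePath a b) := by
  intro s s' hss'
  simp only [affinePath, ContinuousMap.coe_mk, Subtype.mk_le_mk]
  have : (s:ℝ) * (b.1 - a.1) ≤ (s':ℝ) * (b.1 - a.1) :=
    mul_le_mul_of_nonneg_right hss' (by simpa using sub_nonneg.mpr (Subtype.coe_le_coe.mpr hab))
  linarith

lemma affinePath_range {a b : unitInterval} (hab : a ≤ b) :
    Set.range ⇑(affinePath a b) = Set.Icc a b := by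
  ext y
  constructor
  · rintro ⟨s, rfl⟩
    have h0 : (0:ℝ) ≤ b.1 - a.1 := sub_nonneg.mpr hab
    constructor
    · simp only [affinePath, ContinuousMap.coe_mk, ← Subtype.coe_le_coe]
      nlinarith [s.2.1]
    · simp only [affinePath, ContinuousMap.coe_mk, ← Subtype.coe_le_coe]
      nlinarith [s.2.2]
  · intro hy
    rcases eq_or_lt_of_le hab with h | h
    · refine ⟨0, ?_⟩
      have : y = a := le_antisymm (h ▸ hy.2) hy.1
      simp [affinePath, this]
    · have hba : (0:ℝ) < b.1 - a.1 := sub_pos.mpr h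
      refine ⟨⟨(y.1 - a.1) / (b.1 - a.1), ?_, ?_⟩, ?_⟩
      · exact div_nonneg (sub_nonneg.mpr hy.1) hba.le
      · rw [div_le_one hba]; have := Subtype.coe_le_coe.mpr hy.2; linarith
      · simp only [affinePath, ContinuousMap.coe_mk]
        ext
        field_simp
        ring
  
lemma mem_satPaths_of_mem {X : Type*} [TopologicalSpace X] (D : DSpace X)
    {p : C(unitInterval, X)} (hp : p ∈ D.d) : p ∈ satPaths D.d := by
  intro U hU c hc t ht
  have hopen : IsOpen (⇑p ⁻¹' U) := hU.preimage p.continuous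
  obtain ⟨a, b, htab, hnhds, hsub⟩ :=
    exists_Icc_mem_subset_of_mem_nhds (hopen.mem_nhds ht)
  have hab : a ≤ b := htab.1.trans htab.2
  refine ⟨Set.Icc a b, hnhds, hsub, ?_⟩
  have hmem : p.comp (affinePath a b) ∈ D.d :=
    D.reparam_mem p hp _ (affinePath_monotone hab)
  have hrange : Set.range ⇑(p.comp (affinePath a b)) ⊆ U := by
    rintro _ ⟨s, rfl⟩
    exact hsub (by rw [← affinePath_range hab]; exact ⟨s, rfl⟩)
  have hmono := hc.2 _ hmem hrange
  intro x hx y hy hxy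
  obtain ⟨s, hs⟩ : x ∈ Set.range ⇑(affinePath a b) := by rw [affinePath_range hab]; exact hx
  obtain ⟨s', hs'⟩ : y ∈ Set.range ⇑(affinePath a b) := by rw [affinePath_range hab]; exact hy
  rcases le_total s s' with h | h
  · have := hmono h
    simpa [ContinuousMap.comp_apply, hs, hs'] using this
  · have hyx : y ≤ x := by
      rw [← hs, ← hs']; exact affinePath_monotone hab h
    have : x = y := le_antisymm hxy hyx
    simp [this]

theorem stmt_5 {X Y : Type*} [TopologicalSpace X] [TopologicalSpace Y]
    (D : DSpace X) (E : DSpace Y) (hE : IsSaturated E.d) (f : C(X, Y)) :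
    (∀ p ∈ D.d, f.comp p ∈ E.d) ↔ (∀ p ∈ satPaths D.d, f.comp p ∈ E.d) := by
  constructor
  · intro hf p hp
    rw [← hE]
    intro U hU c hc t ht
    have hc' : IsDirectedFn D.d (⇑f ⁻¹' U) (c ∘ ⇑f) := by
      constructor
      · exact hc.1.comp f.continuous.continuousOn (Set.mapsTo_preimage _ _)
      · intro q hq hrange
        have : Set.range ⇑(f.comp q) ⊆ U := by
          rintro _ ⟨s, rfl⟩; exact hrange ⟨s, rfl⟩
        simpa [Function.comp_def] using hc.2 _ (hf q hq) this
    obtain ⟨V, hV, hVsub, hVmono⟩ := hp _ (hU.preimage f.continuous) _ hc' t ht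
    exact ⟨V, hV, hVsub, by simpa [Function.comp_def] using hVmono⟩
  · intro hf p hp
    exact hf p (mem_satPaths_of_mem D hp)
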